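/- arXiv:2010.04460 — 2 statements merged into one kernel-verified Lean document; each statement's English description precedes it below -/
import Mathlib

section
/- Let $g : [0, 2\pi] \to \mathbb{R}$ be continuous and strictly concave with $g(x) = g(2\pi - x)$ for all $x$. Define $h(\beta_1, \dots, \beta_{m-1}) = \sum_{0 \leq i < j \leq m-1} g(|\beta_j - \beta_i|)$ with $\beta_0 = 0$ and $0 \leq \beta_1 \leq \cdots \leq \beta_{m-1} < 2\pi$. Then $h$ attains its maximum value $\tfrac{1}{2} \sum_{s=1}^{m-1} m \, g(2\pi s/m)$ exactly when $\beta_i = 2\pi i/m$ for all $i$, i.e., at the vertices of the regular $m$-gon. -/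
open Real Finset

namespace RegPolyAux

noncomputable def dd (m : ℕ) (β : ℕ → ℝ) (s k : ℕ) : ℝ :=
  if k + s < m then β (k + s) - β k else β (k + s - m) - β k + 2 * π

variable {m : ℕ} {β : ℕ → ℝ} {g : ℝ → ℝ}

lemma mono (hmono : ∀ i < m - 1, β i ≤ β (i + 1)) :
    ∀ j, j < m → ∀ i, i ≤ j → β i ≤ β j := by
  intro j
  induction j with
  | zero =>
    intro _ i hi
    obtain rfl : i = 0 := Nat.le_zero.mp hi
    exact le_rfl
  | succ n ih =>
    intro hj i hi
    rcases eq_or_lt_of_le hi with rfl | h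
    · exact le_rfl
    · exact (ih (by omega) i (by omega)).trans (hmono n (by omega))

lemma beta_nonneg (hβ0 : β 0 = 0) (hmono : ∀ i < m - 1, β i ≤ β (i + 1)) :
    ∀ i < m, 0 ≤ β i := fun i hi => hβ0 ▸ mono hmono i hi 0 (Nat.zero_le _)

lemma beta_lt (hm : 2 ≤ m) (hmono : ∀ i < m - 1, β i ≤ β (i + 1))
    (hlt : β (m - 1) < 2 * π) : ∀ i < m, β i < 2 * π := fun i hi =>
  lt_of_le_of_lt (mono hmono (m - 1) (by omega) i (by omega)) hlt

lemma dd_mem (hm : 2 ≤ m) (hβ0 : β 0 = 0) (hmono : ∀ i < m - 1, β i ≤ β (i + 1))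
    (hlt : β (m - 1) < 2 * π) {s k : ℕ} (hs : 1 ≤ s) (hs' : s ≤ m - 1) (hk : k < m) :
    dd m β s k ∈ Set.Icc 0 (2 * π) := by
  have h0 := beta_nonneg hβ0 hmono
  have h2 := beta_lt hm hmono hlt
  rw [dd]
  split_ifs with h
  · constructor
    · have := mono hmono (k + s) h k (by omega)
      linarith
    · have := h0 k hk
      have := h2 (k + s) h
      linarith
  · have hle : β (k + s - m) ≤ β k := mono hmono k hk (k + s - m) (by omega)
    have ha := h0 (k + s - m) (by omega)
    have hb := h2 k hk
    have hc := h0 k hk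
    constructor <;> linarith

lemma dd_sum (hm : 2 ≤ m) {s : ℕ} (hs : 1 ≤ s) (hs' : s ≤ m - 1) :
    ∑ k ∈ range m, dd m β s k = 2 * π * s := by
  have hsm : s ≤ m := by omega
  rw [range_eq_Ico, ← Finset.sum_Ico_consecutive _ (Nat.zero_le (m - s)) (by omega : m - s ≤ m)]
  have h1 : ∑ k ∈ Ico 0 (m - s), dd m β s k = ∑ k ∈ Ico 0 (m - s), (β (k + s) - β k) :=
    Finset.sum_congr rfl fun k hk => by
      rw [mem_Ico] at hk; rw [dd, if_pos (by omega)]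
  have h2 : ∑ k ∈ Ico (m - s) m, dd m β s k
      = ∑ k ∈ Ico (m - s) m, (β (k + s - m) - β k + 2 * π) :=
    Finset.sum_congr rfl fun k hk => by
      rw [mem_Ico] at hk; rw [dd, if_neg (by omega)]
  rw [h1, h2, Finset.sum_sub_distrib, Finset.sum_add_distrib, Finset.sum_sub_distrib,
    Finset.sum_const, Nat.card_Ico]
  have hA : ∑ k ∈ Ico 0 (m - s), β (k + s) = ∑ j ∈ Ico s m, β j := by
    rw [Nat.Ico_zero_eq_range, Finset.sum_Ico_eq_sum_range]
    exact Finset.sum_congr rfl fun k _ => by rw [Nat.add_comm]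
  have hB : ∑ k ∈ Ico (m - s) m, β (k + s - m) = ∑ t ∈ range s, β t := by
    rw [Finset.sum_Ico_eq_sum_range]
    refine Finset.sum_congr (by congr 1; omega) fun t ht => ?_
    congr 1
    omega
  have hC : ∑ t ∈ range s, β t + ∑ j ∈ Ico s m, β j = ∑ j ∈ range m, β j := by
    simp only [range_eq_Ico]
    exact Finset.sum_Ico_consecutive β (Nat.zero_le s) hsm
  have hD : ∑ k ∈ Ico 0 (m - s), β k + ∑ k ∈ Ico (m - s) m, β k = ∑ j ∈ range m, β j := by
    simp only [range_eq_Ico]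
    exact Finset.sum_Ico_consecutive β (Nat.zero_le (m - s)) (by omega : m - s ≤ m)
  have hcard : ((m - (m - s)) : ℕ) = s := by omega
  rw [hA, hB, hcard, nsmul_eq_mul]
  push_cast
  linarith [hC, hD]

lemma key_identity (hm : 2 ≤ m) (hβ0 : β 0 = 0) (hmono : ∀ i < m - 1, β i ≤ β (i + 1))
    (hlt : β (m - 1) < 2 * π) (hsym : ∀ x ∈ Set.Icc 0 (2 * π), g x = g (2 * π - x)) :
    ∑ s ∈ Icc 1 (m - 1), ∑ k ∈ range m, g (dd m β s k)
      = 2 * ∑ j ∈ range m, ∑ i ∈ range j, g (β j - β i) := by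
  have h0 := beta_nonneg hβ0 hmono
  have h2 := beta_lt hm hmono hlt
  have step1 : ∀ s ∈ Icc 1 (m - 1),
      ∑ k ∈ range m, g (dd m β s k)
        = (∑ k ∈ Ico 0 (m - s), g (β (k + s) - β k))
          + ∑ k ∈ Ico (m - s) m, g (β k - β (k + s - m)) := by
    intro s hs
    rw [mem_Icc] at hs
    rw [range_eq_Ico, ← Finset.sum_Ico_consecutive _ (Nat.zero_le (m - s)) (by omega : m - s ≤ m)]
    congr 1
    · exact Finset.sum_congr rfl fun k hk => by
        rw [mem_Ico] at hk; rw [dd, if_pos (by omega)]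
    · refine Finset.sum_congr rfl fun k hk => ?_
      rw [mem_Ico] at hk
      rw [dd, if_neg (by omega)]
      have hx : β k - β (k + s - m) ∈ Set.Icc 0 (2 * π) := by
        have hle : β (k + s - m) ≤ β k := mono hmono k hk.2 (k + s - m) (by omega)
        have := h0 (k + s - m) (by omega)
        have := h2 k hk.2
        constructor <;> [linarith; linarith]
      rw [hsym _ hx]
      congr 1
      ring
  rw [Finset.sum_congr rfl step1, Finset.sum_add_distrib]
  have T1 : (∑ s ∈ Icc 1 (m - 1), ∑ k ∈ Ico 0 (m - s), g (β (k + s) - β k))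
      = ∑ j ∈ range m, ∑ i ∈ range j, g (β j - β i) := by
    rw [Finset.sum_sigma', Finset.sum_sigma']
    refine Finset.sum_nbij' (fun p => ⟨p.2 + p.1, p.2⟩) (fun p => ⟨p.1 - p.2, p.2⟩)
      ?_ ?_ ?_ ?_ ?_
    · rintro ⟨s, k⟩ h
      simp only [mem_sigma, mem_Icc, mem_Ico, mem_range] at *
      omega
    · rintro ⟨j, i⟩ h
      simp only [mem_sigma, mem_Icc, mem_Ico, mem_range] at *
      omega
    · rintro ⟨s, k⟩ h
      simp only [mem_sigma, mem_Icc, mem_Ico] at h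
      simp only []
      rw [show k + s - k = s from by omega]
    · rintro ⟨j, i⟩ h
      simp only [mem_sigma, mem_range] at h
      simp only []
      rw [show i + (j - i) = j from by omega]
    · rintro ⟨s, k⟩ _
      rfl
  have T2 : (∑ s ∈ Icc 1 (m - 1), ∑ k ∈ Ico (m - s) m, g (β k - β (k + s - m)))
      = ∑ j ∈ range m, ∑ i ∈ range j, g (β j - β i) := by
    rw [Finset.sum_sigma', Finset.sum_sigma']
    refine Finset.sum_nbij' (fun p => ⟨p.2, p.2 + p.1 - m⟩) (fun p => ⟨m - (p.1 - p.2), p.1⟩)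
      ?_ ?_ ?_ ?_ ?_
    · rintro ⟨s, k⟩ h
      simp only [mem_sigma, mem_Icc, mem_Ico, mem_range] at *
      omega
    · rintro ⟨j, i⟩ h
      simp only [mem_sigma, mem_Icc, mem_Ico, mem_range] at *
      omega
    · rintro ⟨s, k⟩ h
      simp only [mem_sigma, mem_Icc, mem_Ico] at h
      simp only []
      rw [show m - (k - (k + s - m)) = s from by omega]
    · rintro ⟨j, i⟩ h
      simp only [mem_sigma, mem_range] at h
      simp only []
      rw [show j + (m - (j - i)) - m = i from by omega]
    · rintro ⟨s, k⟩ _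
      rfl
  rw [T1, T2]
  ring

lemma jensen_le (hm : 2 ≤ m) (hg : StrictConcaveOn ℝ (Set.Icc 0 (2 * π)) g)
    (hβ0 : β 0 = 0) (hmono : ∀ i < m - 1, β i ≤ β (i + 1)) (hlt : β (m - 1) < 2 * π)
    {s : ℕ} (hs : 1 ≤ s) (hs' : s ≤ m - 1) :
    ∑ k ∈ range m, g (dd m β s k) ≤ m * g (2 * π * s / m) := by
  have hm0 : (0 : ℝ) < m := by exact_mod_cast Nat.cast_pos.mpr (by omega : 0 < m)
  have hw : ∑ _k ∈ range m, (1 / (m : ℝ)) = 1 := by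
    rw [Finset.sum_const, Finset.card_range, nsmul_eq_mul]
    field_simp
  have hmem : ∀ k ∈ range m, dd m β s k ∈ Set.Icc 0 (2 * π) := fun k hk =>
    dd_mem hm hβ0 hmono hlt hs hs' (mem_range.mp hk)
  have h := hg.concaveOn.le_map_sum (fun k _ => by positivity) hw hmem
  have hsum : ∑ k ∈ range m, (1 / (m : ℝ)) • dd m β s k = 2 * π * s / m := by
    simp only [smul_eq_mul]
    rw [← Finset.mul_sum, dd_sum hm hs hs']
    ring
  rw [hsum] at h
  simp only [smul_eq_mul] at h
  rw [← Finset.mul_sum] at h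
  calc ∑ k ∈ range m, g (dd m β s k)
      = m * ((1 / (m : ℝ)) * ∑ k ∈ range m, g (dd m β s k)) := by field_simp
    _ ≤ m * g (2 * π * s / m) := mul_le_mul_of_nonneg_left h hm0.le

lemma jensen_eq (hm : 2 ≤ m) (hg : StrictConcaveOn ℝ (Set.Icc 0 (2 * π)) g)
    (hβ0 : β 0 = 0) (hmono : ∀ i < m - 1, β i ≤ β (i + 1)) (hlt : β (m - 1) < 2 * π)
    {s : ℕ} (hs : 1 ≤ s) (hs' : s ≤ m - 1)
    (heq : ∑ k ∈ range m, g (dd m β s k) = m * g (2 * π * s / m)) :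
    ∀ k < m, dd m β s k = 2 * π * s / m := by
  have hm0 : (0 : ℝ) < m := by exact_mod_cast Nat.cast_pos.mpr (by omega : 0 < m)
  have hw : ∑ _k ∈ range m, (1 / (m : ℝ)) = 1 := by
    rw [Finset.sum_const, Finset.card_range, nsmul_eq_mul]
    field_simp
  have hmem : ∀ k ∈ range m, dd m β s k ∈ Set.Icc 0 (2 * π) := fun k hk =>
    dd_mem hm hβ0 hmono hlt hs hs' (mem_range.mp hk)
  have hsum : ∑ k ∈ range m, (1 / (m : ℝ)) • dd m β s k = 2 * π * s / m := by
    simp only [smul_eq_mul]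
    rw [← Finset.mul_sum, dd_sum hm hs hs']
    ring
  have h_eq : g (∑ k ∈ range m, (1 / (m : ℝ)) • dd m β s k)
      ≤ ∑ k ∈ range m, (1 / (m : ℝ)) • g (dd m β s k) := by
    rw [hsum]
    simp only [smul_eq_mul]
    rw [← Finset.mul_sum, heq]
    have : (1 / (m : ℝ)) * (m * g (2 * π * s / m)) = g (2 * π * s / m) := by field_simp
    rw [this]
  have hall := hg.eq_of_map_sum_eq (fun k _ => by positivity) hw hmem h_eq
  intro k hk
  have hconst : ∑ j ∈ range m, dd m β s j = ∑ _j ∈ range m, dd m β s k :=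
    Finset.sum_congr rfl fun j hj => hall hj (mem_range.mpr hk)
  rw [dd_sum hm hs hs', Finset.sum_const, Finset.card_range, nsmul_eq_mul] at hconst
  rw [eq_div_iff hm0.ne']
  linarith

lemma dd_regular (hm : 2 ≤ m) (hreg : ∀ i < m, β i = 2 * π * i / m)
    {s k : ℕ} (hs : 1 ≤ s) (hs' : s ≤ m - 1) (hk : k < m) :
    dd m β s k = 2 * π * s / m := by
  have hm0 : (m : ℝ) ≠ 0 := by positivity
  rw [dd]
  split_ifs with h
  · rw [hreg (k + s) h, hreg k hk]
    push_cast
    field_simp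
    ring
  · rw [hreg (k + s - m) (by omega), hreg k hk]
    rw [Nat.cast_sub (by omega : m ≤ k + s)]
    push_cast
    field_simp
    ring

end RegPolyAux

open RegPolyAux in
theorem pairwise_sum_max_regular_polygon (m : ℕ) (hm : 2 ≤ m)
    (g : ℝ → ℝ) (hgc : ContinuousOn g (Set.Icc 0 (2 * π)))
    (hg : StrictConcaveOn ℝ (Set.Icc 0 (2 * π)) g)
    (hsym : ∀ x ∈ Set.Icc 0 (2 * π), g x = g (2 * π - x))
    (β : ℕ → ℝ) (hβ0 : β 0 = 0)
    (hmono : ∀ i < m - 1, β i ≤ β (i + 1)) (hlt : β (m - 1) < 2 * π) :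
    (∑ j ∈ Finset.range m, ∑ i ∈ Finset.range j, g (|β j - β i|)) ≤
        (1 / 2) * ∑ s ∈ Finset.Icc 1 (m - 1), m * g (2 * π * s / m) ∧
      ((∑ j ∈ Finset.range m, ∑ i ∈ Finset.range j, g (|β j - β i|)) =
          (1 / 2) * ∑ s ∈ Finset.Icc 1 (m - 1), m * g (2 * π * s / m) ↔
        ∀ i < m, β i = 2 * π * i / m) := by
  have habs : (∑ j ∈ Finset.range m, ∑ i ∈ Finset.range j, g (|β j - β i|))
      = ∑ j ∈ Finset.range m, ∑ i ∈ Finset.range j, g (β j - β i) := by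
    refine Finset.sum_congr rfl fun j hj => Finset.sum_congr rfl fun i hi => ?_
    rw [mem_range] at hj hi
    rw [abs_of_nonneg (by linarith [mono hmono j hj i (by omega)])]
  have key := key_identity hm hβ0 hmono hlt hsym
  have hle : ∀ s ∈ Icc 1 (m - 1),
      ∑ k ∈ range m, g (dd m β s k) ≤ (m : ℝ) * g (2 * π * s / m) := fun s hs => by
    rw [mem_Icc] at hs
    exact jensen_le hm hg hβ0 hmono hlt hs.1 hs.2
  have hmain : (∑ j ∈ Finset.range m, ∑ i ∈ Finset.range j, g (|β j - β i|)) ≤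
      (1 / 2) * ∑ s ∈ Finset.Icc 1 (m - 1), m * g (2 * π * s / m) := by
    rw [habs]
    have := Finset.sum_le_sum hle
    linarith [key ▸ this]
  refine ⟨hmain, ?_, ?_⟩
  · -- equality implies regular
    intro heq
    rw [habs] at heq
    have hsumeq : ∑ s ∈ Icc 1 (m - 1), ∑ k ∈ range m, g (dd m β s k)
        = ∑ s ∈ Icc 1 (m - 1), (m : ℝ) * g (2 * π * s / m) := by
      rw [key]
      linarith
    have hterm := (Finset.sum_eq_sum_iff_of_le hle).mp hsumeq
    have h1 := jensen_eq hm hg hβ0 hmono hlt le_rfl (by omega : 1 ≤ m - 1)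
      (hterm 1 (by rw [mem_Icc]; omega))
    simp only [Nat.cast_one] at h1
    have hstep : ∀ n, n + 1 < m → β (n + 1) = β n + 2 * π * 1 / m := by
      intro n hn
      have := h1 n (by omega)
      rw [dd, if_pos hn] at this
      linarith
    intro i
    induction i with
    | zero => intro _; simp [hβ0]
    | succ n ih =>
      intro hn
      have hbn := ih (by omega)
      have := hstep n hn
      rw [hbn] at this
      rw [this]
      push_cast
      ring
  · -- regular implies equality
    intro hreg
    rw [habs]
    have hdd : ∑ s ∈ Icc 1 (m - 1), ∑ k ∈ range m, g (dd m β s k)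
        = ∑ s ∈ Icc 1 (m - 1), (m : ℝ) * g (2 * π * s / m) := by
      refine Finset.sum_congr rfl fun s hs => ?_
      rw [mem_Icc] at hs
      have : ∑ k ∈ range m, g (dd m β s k) = ∑ _k ∈ range m, g (2 * π * s / m) :=
        Finset.sum_congr rfl fun k hk =>
          congrArg g (dd_regular hm hreg hs.1 hs.2 (mem_range.mp hk))
      rw [this, Finset.sum_const, Finset.card_range, nsmul_eq_mul]
    rw [hdd] at key
    linarith
end

section
/- The minimum of $\sum_{0 \le i < j \le 2} \frac{1}{|U_i U_j|}$ over triples of points $U_0, U_1, U_2$ on the unit circle, where $|U_iU_j| = 2\sin(|\beta_j - \beta_i|/2)$ for angular coordinates $\beta_i$, equals $\sqrt{3}$, attained exactly when the three points form an equilateral triangle. -/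
open Real Set

lemma two_pt {p q : ℝ} (hp : p ∈ Icc 0 π) (hq : q ∈ Icc 0 π) :
    sin p + sin q ≤ 2 * sin ((p + q) / 2) := by
  have h := strictConcaveOn_sin_Icc.concaveOn.2 hp hq (by norm_num : (0:ℝ) ≤ 1/2)
    (by norm_num : (0:ℝ) ≤ 1/2) (by norm_num)
  simp only [smul_eq_mul] at h
  have : (1/2 : ℝ) * p + 1/2 * q = (p + q) / 2 := by ring
  rw [this] at h; linarith

lemma two_pt_strict {p q : ℝ} (hp : p ∈ Icc 0 π) (hq : q ∈ Icc 0 π) (hne : p ≠ q) :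
    sin p + sin q < 2 * sin ((p + q) / 2) := by
  have h := strictConcaveOn_sin_Icc.2 hp hq hne (by norm_num : (0:ℝ) < 1/2)
    (by norm_num : (0:ℝ) < 1/2) (by norm_num)
  simp only [smul_eq_mul] at h
  have : (1/2 : ℝ) * p + 1/2 * q = (p + q) / 2 := by ring
  rw [this] at h; linarith

-- Jensen: sum of sines bound
lemma sin_sum_le {x y z : ℝ} (hx : 0 < x) (hy : 0 < y) (hz : 0 < z)
    (hsum : x + y + z = π) : sin x + sin y + sin z ≤ 3 * sin (π / 3) := by
  have hpi := pi_pos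
  have hx1 : x ∈ Icc 0 π := ⟨hx.le, by linarith⟩
  have hy1 : y ∈ Icc 0 π := ⟨hy.le, by linarith⟩
  have hz1 : z ∈ Icc 0 π := ⟨hz.le, by linarith⟩
  have hp3 : π/3 ∈ Icc 0 π := ⟨by linarith, by linarith⟩
  have h1 : sin x + sin y ≤ 2 * sin ((x + y) / 2) := two_pt hx1 hy1
  have h2 : sin z + sin (π/3) ≤ 2 * sin ((z + π/3) / 2) := two_pt hz1 hp3
  have hm1 : (x + y) / 2 ∈ Icc 0 π := ⟨by linarith, by linarith⟩
  have hm2 : (z + π/3) / 2 ∈ Icc 0 π := ⟨by linarith, by linarith⟩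
  have h3 : sin ((x + y) / 2) + sin ((z + π/3) / 2)
      ≤ 2 * sin (((x + y) / 2 + (z + π/3) / 2) / 2) := two_pt hm1 hm2
  have hmid : ((x + y) / 2 + (z + π/3) / 2) / 2 = π/3 := by
    field_simp; linarith
  rw [hmid] at h3
  linarith

lemma sin_sum_lt {x y z : ℝ} (hx : 0 < x) (hy : 0 < y) (hz : 0 < z)
    (hsum : x + y + z = π) (hne : x ≠ y ∨ z ≠ π/3) :
    sin x + sin y + sin z < 3 * sin (π / 3) := by
  have hpi := pi_pos
  have hx1 : x ∈ Icc 0 π := ⟨hx.le, by linarith⟩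
  have hy1 : y ∈ Icc 0 π := ⟨hy.le, by linarith⟩
  have hz1 : z ∈ Icc 0 π := ⟨hz.le, by linarith⟩
  have hp3 : π/3 ∈ Icc 0 π := ⟨by linarith, by linarith⟩
  have hm1 : (x + y) / 2 ∈ Icc 0 π := ⟨by linarith, by linarith⟩
  have hm2 : (z + π/3) / 2 ∈ Icc 0 π := ⟨by linarith, by linarith⟩
  have h3 : sin ((x + y) / 2) + sin ((z + π/3) / 2)
      ≤ 2 * sin (((x + y) / 2 + (z + π/3) / 2) / 2) := two_pt hm1 hm2
  have hmid : ((x + y) / 2 + (z + π/3) / 2) / 2 = π/3 := by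
    field_simp; linarith
  rw [hmid] at h3
  rcases hne with hne | hne
  · have h1 : sin x + sin y < 2 * sin ((x + y) / 2) := two_pt_strict hx1 hy1 hne
    have h2 : sin z + sin (π/3) ≤ 2 * sin ((z + π/3) / 2) := two_pt hz1 hp3
    linarith
  · have h1 : sin x + sin y ≤ 2 * sin ((x + y) / 2) := two_pt hx1 hy1
    have h2 : sin z + sin (π/3) < 2 * sin ((z + π/3) / 2) := two_pt_strict hz1 hp3 hne
    linarith

lemma am_hm {a b c : ℝ} (ha : 0 < a) (hb : 0 < b) (hc : 0 < c) :
    9 / (a + b + c) ≤ 1 / a + 1 / b + 1 / c := by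
  rw [div_add_div _ _ (ne_of_gt ha) (ne_of_gt hb), div_add_div _ _ (by positivity) (ne_of_gt hc),
    div_le_div_iff₀ (by positivity) (by positivity)]
  nlinarith [sq_nonneg (a - b), sq_nonneg (b - c), sq_nonneg (a - c), mul_pos ha hb,
    mul_pos hb hc, mul_pos ha hc, mul_pos (mul_pos ha hb) hc]

theorem min_sum_inverse_chords_triangle (β₁ β₂ : ℝ)
    (h01 : 0 < β₁) (h12 : β₁ < β₂) (h2 : β₂ < 2 * π) :
    Real.sqrt 3 ≤
        1 / (2 * sin (β₁ / 2)) + 1 / (2 * sin (β₂ / 2)) +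
          1 / (2 * sin ((β₂ - β₁) / 2)) ∧
      (1 / (2 * sin (β₁ / 2)) + 1 / (2 * sin (β₂ / 2)) +
            1 / (2 * sin ((β₂ - β₁) / 2)) = Real.sqrt 3 ↔
        β₁ = 2 * π / 3 ∧ β₂ = 4 * π / 3) := by
  have hpi := pi_pos
  set x := β₁ / 2 with hxd
  set y := (β₂ - β₁) / 2 with hyd
  have hz : β₂ / 2 = π - (π - x - y) := by rw [hxd, hyd]; ring
  set z := π - x - y with hzd
  have hx : 0 < x := by rw [hxd]; linarith
  have hy : 0 < y := by rw [hyd]; linarith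
  have hz0 : 0 < z := by rw [hzd, hxd, hyd]; linarith
  have hsum : x + y + z = π := by rw [hzd]; ring
  have hsz : sin (β₂ / 2) = sin z := by rw [hz, sin_pi_sub]
  have hsx : 0 < sin x := sin_pos_of_pos_of_lt_pi hx (by linarith)
  have hsy : 0 < sin y := sin_pos_of_pos_of_lt_pi hy (by linarith)
  have hsz0 : 0 < sin z := sin_pos_of_pos_of_lt_pi hz0 (by linarith)
  have hsp3 : sin (π/3) = Real.sqrt 3 / 2 := sin_pi_div_three
  have hs3 : (0:ℝ) < Real.sqrt 3 := by positivity
  have hs3sq : Real.sqrt 3 * Real.sqrt 3 = 3 :=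
    Real.mul_self_sqrt (by norm_num)
  -- main chain
  have hS := sin_sum_le hx hy hz0 hsum
  rw [hsp3] at hS
  have hSpos : 0 < sin x + sin y + sin z := by positivity
  have hchain : Real.sqrt 3 ≤ 1 / (2 * sin x) + 1 / (2 * sin z) + 1 / (2 * sin y) := by
    have h1 : 9 / (sin x + sin y + sin z) ≤ 1 / sin x + 1 / sin y + 1 / sin z :=
      am_hm hsx hsy hsz0
    have h2 : 2 * Real.sqrt 3 ≤ 9 / (sin x + sin y + sin z) := by
      rw [le_div_iff₀ hSpos]
      nlinarith
    have : 2 * Real.sqrt 3 ≤ 1 / sin x + 1 / sin y + 1 / sin z := le_trans h2 h1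
    have e1 : 1 / (2 * sin x) = (1 / sin x) / 2 := by ring
    have e2 : 1 / (2 * sin y) = (1 / sin y) / 2 := by ring
    have e3 : 1 / (2 * sin z) = (1 / sin z) / 2 := by ring
    rw [e1, e2, e3]; linarith
  rw [hsz]
  constructor
  · linarith [hchain]
  constructor
  · intro heq
    -- equality forces sin sum = 3 sin(π/3), forces x=y and z=π/3
    by_contra hcon
    have hne : x ≠ y ∨ z ≠ π/3 := by
      by_contra hne'
      push_neg at hne'
      obtain ⟨hxy, hzp⟩ := hne'
      have hx3 : x = π/3 := by rw [hzd] at hzp; linarith [hxy]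
      apply hcon
      constructor
      · rw [hxd] at hx3; linarith
      · have : y = π/3 := by rw [← hxy]; exact hx3
        rw [hyd] at this; rw [hxd] at hx3; linarith
    have hSlt := sin_sum_lt hx hy hz0 hsum hne
    rw [hsp3] at hSlt
    -- from heq, derive sum sins ≥ 3√3/2, contradiction
    have h1 : 9 / (sin x + sin y + sin z) ≤ 1 / sin x + 1 / sin y + 1 / sin z :=
      am_hm hsx hsy hsz0
    have h2 : 1 / sin x + 1 / sin y + 1 / sin z = 2 * Real.sqrt 3 := by
      have e1 : 1 / (2 * sin x) = (1 / sin x) / 2 := by ring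
      have e2 : 1 / (2 * sin y) = (1 / sin y) / 2 := by ring
      have e3 : 1 / (2 * sin z) = (1 / sin z) / 2 := by ring
      rw [e1, e2, e3] at heq; linarith
    rw [h2, div_le_iff₀ hSpos] at h1
    nlinarith
  · rintro ⟨hb1, hb2⟩
    have hx3 : x = π/3 := by rw [hxd, hb1]; ring
    have hy3 : y = π/3 := by rw [hyd, hb1, hb2]; ring
    have hz3 : z = π/3 := by rw [hzd, hx3, hy3]; ring
    rw [hx3, hy3, hz3, hsp3]
    rw [show 2 * (Real.sqrt 3 / 2) = Real.sqrt 3 by ring]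
    have h13 : (1:ℝ) / Real.sqrt 3 = Real.sqrt 3 / 3 := by
      rw [div_eq_div_iff (ne_of_gt hs3) (by norm_num), hs3sq]; ring
    rw [h13]; ring
end
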